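/- Let D₁, D₂ be probability measures and suppose there exists a measurable set S with D₁(S) ≥ τ and D₂(S) ≤ 1 − τ for some τ ∈ [1/2, 1]. Then the Jensen–Shannon divergence satisfies D_JS(D₁ ‖ D₂) ≥ (2τ−1)²/2. -/

import Mathlib

open scoped ENNReal NNReal
open Matrix MeasureTheory

/-- Kullback–Leibler divergence `∫ log (dP/dQ) dP` (via the Radon–Nikodym derivative). -/
noncomputable def klDivergence {Ω : Type*} [MeasurableSpace Ω] (P Q : Measure Ω) : ℝ :=
  ∫ ω, Real.log ((P.rnDeriv Q ω).toReal) ∂P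

/-- Jensen–Shannon divergence. -/
noncomputable def jsDivergence {Ω : Type*} [MeasurableSpace Ω] (P Q : Measure Ω) : ℝ :=
  (1 / 2) * klDivergence P (((1 : ℝ≥0∞) / 2) • P + ((1 : ℝ≥0∞) / 2) • Q)
    + (1 / 2) * klDivergence Q (((1 : ℝ≥0∞) / 2) • P + ((1 : ℝ≥0∞) / 2) • Q)

open Real in
open Real

lemma pinsker_deriv (a : ℝ) {x : ℝ} (hx : x ∈ Set.Ioo (0:ℝ) 1) :
    HasDerivAt (fun y => -(a * Real.log y) - (1-a) * Real.log (1-y) - 2*(a-y)^2)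
      ((x - a) * (2*x - 1)^2 / (x * (1-x))) x := by
  have hx0 : x ≠ 0 := ne_of_gt hx.1
  have hx1 : (1:ℝ) - x ≠ 0 := by nlinarith [hx.2]
  have h1 : HasDerivAt (fun y => a * Real.log y) (a * x⁻¹) x :=
    (Real.hasDerivAt_log hx0).const_mul a
  have h2 : HasDerivAt (fun y : ℝ => Real.log (1-y)) ((1-x)⁻¹ * (-1)) x :=
    (Real.hasDerivAt_log hx1).comp x ((hasDerivAt_id x).const_sub 1)
  have h2' : HasDerivAt (fun y : ℝ => (1-a) * Real.log (1-y)) ((1-a) * ((1-x)⁻¹ * (-1))) x :=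
    h2.const_mul (1-a)
  have h3 : HasDerivAt (fun y : ℝ => 2*(a-y)^2) (2*(2*(a-x)*(-1))) x := by
    have := (((hasDerivAt_id x).const_sub a).pow 2)
    simpa using this.const_mul 2
  have := ((h1.neg.sub h2').sub h3)
  refine this.congr_deriv ?_
  field_simp
  ring

lemma binary_pinsker {a b : ℝ} (ha : a ∈ Set.Icc (0:ℝ) 1) (hb : b ∈ Set.Ioo (0:ℝ) 1) :
    2 * (a - b) ^ 2 ≤ a * Real.log (a / b) + (1 - a) * Real.log ((1 - a) / (1 - b)) := by
  set F : ℝ → ℝ := fun y => -(a * Real.log y) - (1-a) * Real.log (1-y) - 2*(a-y)^2 with hF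
  -- Step 1: the goal follows from `F b - F a ≥ 0` up to algebra
  have key : F a ≤ F b → 2 * (a - b) ^ 2 ≤ a * Real.log (a / b) + (1 - a) * Real.log ((1 - a) / (1 - b)) := by
    intro h
    have hb0 : b ≠ 0 := ne_of_gt hb.1
    have hb1 : (1:ℝ) - b ≠ 0 := by nlinarith [hb.2]
    have e1 : a * Real.log (a / b) = a * Real.log a - a * Real.log b := by
      rcases eq_or_lt_of_le ha.1 with h0 | h0
      · simp [← h0]
      · rw [Real.log_div (ne_of_gt h0) hb0]; ring
    have e2 : (1-a) * Real.log ((1-a) / (1-b)) = (1-a) * Real.log (1-a) - (1-a) * Real.log (1-b) := by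
      rcases eq_or_lt_of_le ha.2 with h0 | h0
      · simp [h0]
      · rw [Real.log_div (by nlinarith) hb1]; ring
    have Fa : F a = -(a * Real.log a) - (1-a) * Real.log (1-a) := by simp [hF]
    simp only [hF] at h
    rw [e1, e2]
    nlinarith [h]
  apply key
  rcases le_total a b with hab | hab
  · -- F monotone on [a, b]
    have hmono : MonotoneOn F (Set.Icc a b) := by
      have hsub : Set.Ioo a b ⊆ Set.Ioo (0:ℝ) 1 :=
        Set.Ioo_subset_Ioo ha.1 (le_of_lt hb.2)
      apply monotoneOn_of_deriv_nonneg (convex_Icc a b)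
      · -- continuity on [a,b]
        apply ContinuousOn.sub
        apply ContinuousOn.sub
        · apply ContinuousOn.neg
          rcases eq_or_lt_of_le ha.1 with h0 | h0
          · have : (fun y => a * Real.log y) = fun _ => (0:ℝ) := by
              funext y; rw [← h0]; ring
            rw [this]; exact continuousOn_const
          · exact (Real.continuousOn_log.mono (by
              intro y hy; simp only [Set.mem_compl_iff, Set.mem_singleton_iff]
              exact ne_of_gt (lt_of_lt_of_le h0 hy.1))).const_smul a
        · apply ContinuousOn.mul continuousOn_const
          apply Real.continuousOn_log.comp (by fun_prop)
          intro y hy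
          simp only [Set.mem_compl_iff, Set.mem_singleton_iff]
          have : y < 1 := lt_of_le_of_lt hy.2 hb.2
          intro hc; nlinarith
        · fun_prop
      · intro y hy
        rw [interior_Icc] at hy
        exact (pinsker_deriv a (hsub hy)).differentiableAt.differentiableWithinAt
      · intro y hy
        rw [interior_Icc] at hy
        have hy' := hsub hy
        rw [(pinsker_deriv a hy').deriv]
        have h1 : 0 ≤ (y - a) * (2*y - 1)^2 := by nlinarith [hy.1, sq_nonneg (2*y-1)]
        have h2 : 0 < y * (1 - y) := by nlinarith [hy'.1, hy'.2]
        positivity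
    exact hmono (Set.left_mem_Icc.2 hab) (Set.right_mem_Icc.2 hab) hab
  · -- F antitone on [b, a]
    have hanti : AntitoneOn F (Set.Icc b a) := by
      have hsub : Set.Ioo b a ⊆ Set.Ioo (0:ℝ) 1 :=
        Set.Ioo_subset_Ioo (le_of_lt hb.1) ha.2
      apply antitoneOn_of_deriv_nonpos (convex_Icc b a)
      · apply ContinuousOn.sub
        apply ContinuousOn.sub
        · apply ContinuousOn.neg
          apply ContinuousOn.mul continuousOn_const
          apply Real.continuousOn_log.mono
          intro y hy
          simp only [Set.mem_compl_iff, Set.mem_singleton_iff]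
          exact ne_of_gt (lt_of_lt_of_le hb.1 hy.1)
        · rcases eq_or_lt_of_le ha.2 with h0 | h0
          · have : (fun y : ℝ => (1-a) * Real.log (1-y)) = fun _ => (0:ℝ) := by
              funext y; rw [h0]; ring_nf
            rw [this]; exact continuousOn_const
          · apply ContinuousOn.mul continuousOn_const
            apply Real.continuousOn_log.comp (by fun_prop)
            intro y hy
            simp only [Set.mem_compl_iff, Set.mem_singleton_iff]
            have : y < 1 := lt_of_le_of_lt hy.2 h0
            intro hc; nlinarith
        · fun_prop
      · intro y hy
        rw [interior_Icc] at hy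
        exact (pinsker_deriv a (hsub hy)).differentiableAt.differentiableWithinAt
      · intro y hy
        rw [interior_Icc] at hy
        have hy' := hsub hy
        rw [(pinsker_deriv a hy').deriv]
        have h1 : (y - a) * (2*y - 1)^2 ≤ 0 := by nlinarith [hy.2, sq_nonneg (2*y-1)]
        have h2 : 0 < y * (1 - y) := by nlinarith [hy'.1, hy'.2]
        exact div_nonpos_of_nonpos_of_nonneg h1 (le_of_lt h2)
    exact hanti (Set.left_mem_Icc.2 hab) (Set.right_mem_Icc.2 hab) hab

lemma jensen_set {Ω : Type*} [MeasurableSpace Ω] (P M : Measure Ω)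
    [IsProbabilityMeasure P] [IsProbabilityMeasure M] (hPM : P ≪ M)
    (hint : Integrable (fun ω => (P.rnDeriv M ω).toReal * Real.log (P.rnDeriv M ω).toReal) M)
    (S : Set Ω) (hS : MeasurableSet S) (h0 : M S ≠ 0) :
    (P S).toReal * Real.log ((P S).toReal / (M S).toReal)
      ≤ ∫ ω in S, (P.rnDeriv M ω).toReal * Real.log (P.rnDeriv M ω).toReal ∂M := by
  set f : Ω → ℝ := fun ω => (P.rnDeriv M ω).toReal with hf
  set φ : ℝ → ℝ := fun x => x * Real.log x with hφ
  haveI : NeZero (M.restrict S) := ⟨by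
    rw [ne_eq, Measure.restrict_eq_zero]; exact h0⟩
  have hjensen := Real.convexOn_mul_log.map_average_le
    (Real.continuous_mul_log.continuousOn) isClosed_Ici
    (μ := M.restrict S) (f := f)
    (Filter.Eventually.of_forall fun ω => ENNReal.toReal_nonneg)
    (Measure.integrable_toReal_rnDeriv.restrict)
    (hint.restrict)
  rw [average_eq, average_eq] at hjensen
  have hU : (M.restrict S).real Set.univ = (M S).toReal := by
    rw [Measure.real, Measure.restrict_apply_univ]
  rw [hU] at hjensen
  have hfS : ∫ ω in S, f ω ∂M = (P S).toReal :=
    Measure.setIntegral_toReal_rnDeriv hPM S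
  rw [hfS] at hjensen
  have hm0 : 0 < (M S).toReal := ENNReal.toReal_pos h0 (measure_ne_top M S)
  have heq : (M S).toReal⁻¹ • (P S).toReal = (P S).toReal / (M S).toReal := by
    rw [smul_eq_mul]; ring
  rw [heq] at hjensen
  have := mul_le_mul_of_nonneg_left hjensen (le_of_lt hm0)
  rw [smul_eq_mul, ← mul_assoc, ← mul_assoc, mul_inv_cancel₀ (ne_of_gt hm0), one_mul] at this
  calc (P S).toReal * Real.log ((P S).toReal / (M S).toReal)
      = (M S).toReal * ((P S).toReal / (M S).toReal) * Real.log ((P S).toReal / (M S).toReal) := by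
        field_simp
    _ ≤ ∫ ω in S, φ (f ω) ∂M := this

lemma abs_mul_log_le_two {x : ℝ} (h0 : 0 ≤ x) (h2 : x ≤ 2) : |x * Real.log x| ≤ 2 := by
  rcases le_or_gt x 1 with h1 | h1
  · rcases eq_or_lt_of_le h0 with h0' | h0'
    · simp [← h0']
    · have hlog : Real.log x ≤ 0 := Real.log_nonpos h0 h1
      rw [abs_of_nonpos (mul_nonpos_of_nonneg_of_nonpos h0 hlog)]
      have hinv : Real.log x⁻¹ ≤ x⁻¹ - 1 := Real.log_le_sub_one_of_pos (by positivity)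
      rw [Real.log_inv] at hinv
      have : -(x * Real.log x) = x * (-Real.log x) := by ring
      rw [this]
      have := mul_le_mul_of_nonneg_left hinv h0
      calc x * (-Real.log x) ≤ x * (x⁻¹ - 1) := this
        _ = 1 - x := by field_simp
        _ ≤ 2 := by linarith
  · have hlog : 0 ≤ Real.log x := Real.log_nonneg (le_of_lt h1)
    rw [abs_of_nonneg (mul_nonneg h0 hlog)]
    have h2' : Real.log x ≤ Real.log 2 := Real.log_le_log (by linarith) h2
    have hlog2 : Real.log 2 ≤ 1 := by
      have := Real.log_le_sub_one_of_pos (by norm_num : (0:ℝ) < 2)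
      linarith
    calc x * Real.log x ≤ 2 * 1 := mul_le_mul h2 (le_trans h2' hlog2) hlog (by norm_num)
      _ = 2 := by norm_num

lemma kl_ge_twoset {Ω : Type*} [MeasurableSpace Ω] (P M : Measure Ω)
    [IsProbabilityMeasure P] [IsProbabilityMeasure M]
    (hPM : P ≪ M) (hbound : ∀ᵐ ω ∂M, P.rnDeriv M ω ≤ 2)
    (S : Set Ω) (hS : MeasurableSet S) (h0 : M S ≠ 0) (h1 : M Sᶜ ≠ 0) :
    (P S).toReal * Real.log ((P S).toReal / (M S).toReal)
      + (P Sᶜ).toReal * Real.log ((P Sᶜ).toReal / (M Sᶜ).toReal) ≤ klDivergence P M := by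
  set f : Ω → ℝ := fun ω => (P.rnDeriv M ω).toReal with hf
  have hbound' : ∀ᵐ ω ∂M, f ω ≤ 2 := by
    filter_upwards [hbound] with ω hω
    calc f ω ≤ (2 : ℝ≥0∞).toReal := ENNReal.toReal_mono (by norm_num) hω
      _ = 2 := by norm_num
  have hmeas : Measurable fun ω => f ω * Real.log (f ω) :=
    (Measurable.ennreal_toReal (Measure.measurable_rnDeriv P M)).mul
      ((Real.measurable_log.comp (Measurable.ennreal_toReal (Measure.measurable_rnDeriv P M))))
  have hint : Integrable (fun ω => f ω * Real.log (f ω)) M := by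
    refine Integrable.mono' (integrable_const 2) hmeas.aestronglyMeasurable ?_
    filter_upwards [hbound'] with ω hω
    exact abs_mul_log_le_two ENNReal.toReal_nonneg hω
  have hkl : klDivergence P M = ∫ ω, f ω * Real.log (f ω) ∂M := by
    rw [klDivergence]
    rw [← integral_rnDeriv_smul hPM (f := fun ω => Real.log (f ω))]
    simp [smul_eq_mul]
    rfl
  have hsplit : ∫ ω, f ω * Real.log (f ω) ∂M
      = (∫ ω in S, f ω * Real.log (f ω) ∂M) + ∫ ω in Sᶜ, f ω * Real.log (f ω) ∂M := by
    rw [integral_add_compl hS hint]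
  rw [hkl, hsplit]
  exact add_le_add (jensen_set P M hPM hint S hS h0)
    (jensen_set P M hPM hint Sᶜ hS.compl h1)

lemma kl_pinsker {Ω : Type*} [MeasurableSpace Ω] (P M : Measure Ω)
    [IsProbabilityMeasure P] [IsProbabilityMeasure M]
    (hPM : P ≪ M) (hbound : ∀ᵐ ω ∂M, P.rnDeriv M ω ≤ 2)
    (S : Set Ω) (hS : MeasurableSet S) (h0 : M S ≠ 0) (h1 : M Sᶜ ≠ 0) :
    2 * ((P S).toReal - (M S).toReal)^2 ≤ klDivergence P M := by
  have ha : (P S).toReal ∈ Set.Icc (0:ℝ) 1 :=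
    ⟨ENNReal.toReal_nonneg, by simpa using ENNReal.toReal_mono ENNReal.one_ne_top prob_le_one⟩
  have hPc : (P Sᶜ).toReal = 1 - (P S).toReal := by
    rw [prob_compl_eq_one_sub hS, ENNReal.toReal_sub_of_le prob_le_one ENNReal.one_ne_top,
      ENNReal.toReal_one]
  have hMc : (M Sᶜ).toReal = 1 - (M S).toReal := by
    rw [prob_compl_eq_one_sub hS, ENNReal.toReal_sub_of_le prob_le_one ENNReal.one_ne_top,
      ENNReal.toReal_one]
  have hb : (M S).toReal ∈ Set.Ioo (0:ℝ) 1 := by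
    constructor
    · exact ENNReal.toReal_pos h0 (measure_ne_top M S)
    · have : 0 < (M Sᶜ).toReal := ENNReal.toReal_pos h1 (measure_ne_top M Sᶜ)
      rw [hMc] at this; linarith
  have hp := binary_pinsker ha hb
  have hk := kl_ge_twoset P M hPM hbound S hS h0 h1
  rw [hPc, hMc] at hk
  linarith

/-- If `D₁(S) ≥ τ` and `D₂(S) ≤ 1 − τ` for some measurable `S` and `τ ∈ [1/2, 1]`, then
`D_JS(D₁ ‖ D₂) ≥ (2τ−1)²/2`. -/
theorem jsd_ge_of_separated_set
    {Ω : Type*} [MeasurableSpace Ω] (D₁ D₂ : Measure Ω)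
    [IsProbabilityMeasure D₁] [IsProbabilityMeasure D₂]
    (τ : ℝ) (hτ : τ ∈ Set.Icc (1 / 2 : ℝ) 1)
    (S : Set Ω) (hS : MeasurableSet S)
    (h₁ : ENNReal.ofReal τ ≤ D₁ S) (h₂ : D₂ S ≤ ENNReal.ofReal (1 - τ)) :
    (2 * τ - 1) ^ 2 / 2 ≤ jsDivergence D₁ D₂ := by
  obtain ⟨hτl, hτu⟩ := hτ
  have hτ0 : (0:ℝ) < τ := by linarith
  set M : Measure Ω := ((1 : ℝ≥0∞) / 2) • D₁ + ((1 : ℝ≥0∞) / 2) • D₂ with hM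
  have hhalf : (1 : ℝ≥0∞) / 2 ≠ 0 := by norm_num
  haveI hMprob : IsProbabilityMeasure M := by
    constructor
    simp only [hM, Measure.add_apply, Measure.smul_apply, smul_eq_mul, measure_univ, mul_one]
    exact ENNReal.add_halves 1
  -- absolute continuity
  have habs₁ : D₁ ≪ M := by
    refine Measure.AbsolutelyContinuous.mk fun s hs h => ?_
    simp only [hM, Measure.add_apply, Measure.smul_apply, smul_eq_mul, add_eq_zero,
      mul_eq_zero] at h
    rcases h.1 with h' | h'
    · exact absurd h' hhalf
    · exact h'
  have habs₂ : D₂ ≪ M := by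
    refine Measure.AbsolutelyContinuous.mk fun s hs h => ?_
    simp only [hM, Measure.add_apply, Measure.smul_apply, smul_eq_mul, add_eq_zero,
      mul_eq_zero] at h
    rcases h.2 with h' | h'
    · exact absurd h' hhalf
    · exact h'
  -- 2 • M = D₁ + D₂
  have h2M : (2 : ℝ≥0∞) • M = D₁ + D₂ := by
    rw [hM, smul_add, smul_smul, smul_smul]
    have : (2 : ℝ≥0∞) * ((1:ℝ≥0∞)/2) = 1 := by
      rw [mul_comm, ENNReal.div_mul_cancel (by norm_num) (by norm_num)]
    rw [this, one_smul, one_smul]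
  -- rnDeriv bound
  have hbound : ∀ (P : Measure Ω), [IsProbabilityMeasure P] → P ≤ (2:ℝ≥0∞) • M →
      ∀ᵐ ω ∂M, P.rnDeriv M ω ≤ 2 := by
    intro P _ hle
    haveI : IsFiniteMeasure ((2:ℝ≥0∞) • M) := by rw [h2M]; infer_instance
    have h1 : P.rnDeriv ((2:ℝ≥0∞) • M) ≤ᵐ[(2:ℝ≥0∞) • M] 1 := Measure.rnDeriv_le_one_of_le hle
    have h1' : ∀ᵐ ω ∂M, P.rnDeriv ((2:ℝ≥0∞) • M) ω ≤ 1 :=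
      by
        have h1 := ae_iff.1 h1
        rw [Measure.smul_apply, smul_eq_mul, mul_eq_zero] at h1
        exact ae_iff.2 (h1.resolve_left (by norm_num))
    have h2 : P.rnDeriv ((2:ℝ≥0∞) • M) =ᵐ[M] (2:ℝ≥0∞)⁻¹ • P.rnDeriv M :=
      Measure.rnDeriv_smul_right_of_ne_top P M (by norm_num) (by norm_num)
    filter_upwards [h1', h2] with ω hω₁ hω₂
    rw [hω₂] at hω₁
    simp only [Pi.smul_apply, smul_eq_mul] at hω₁
    calc P.rnDeriv M ω = 2 * (2⁻¹ * P.rnDeriv M ω) := by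
          rw [← mul_assoc, ENNReal.mul_inv_cancel (by norm_num) (by norm_num), one_mul]
      _ ≤ 2 * 1 := by exact mul_le_mul_right hω₁ 2
      _ = 2 := mul_one 2
  have hb₁ : ∀ᵐ ω ∂M, D₁.rnDeriv M ω ≤ 2 := hbound D₁ (by rw [h2M]; exact Measure.le_add_right le_rfl)
  have hb₂ : ∀ᵐ ω ∂M, D₂.rnDeriv M ω ≤ 2 := hbound D₂ (by rw [h2M]; exact Measure.le_add_left le_rfl)
  -- nondegeneracy of M on S and Sᶜ
  have hD₁S : D₁ S ≠ 0 := by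
    intro h
    rw [h] at h₁
    have : τ ≤ 0 := by simpa [ENNReal.ofReal_eq_zero] using le_antisymm h₁ zero_le
    linarith
  have hD₂Sc : D₂ Sᶜ ≠ 0 := by
    intro h
    have hD₂S : (1:ℝ≥0∞) ≤ D₂ S := by
      rw [prob_compl_eq_one_sub hS, tsub_eq_zero_iff_le] at h
      exact h
    have : (1:ℝ≥0∞) ≤ ENNReal.ofReal (1 - τ) := le_trans hD₂S h₂
    have h' : ENNReal.ofReal (1 - τ) < 1 := by
      rw [ENNReal.ofReal_lt_one]
      linarith
    exact absurd this (not_le.2 h')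
  have h0 : M S ≠ 0 := by
    intro h
    simp only [hM, Measure.add_apply, Measure.smul_apply, smul_eq_mul, add_eq_zero,
      mul_eq_zero] at h
    rcases h.1 with h' | h'
    · exact hhalf h'
    · exact hD₁S h'
  have h1 : M Sᶜ ≠ 0 := by
    intro h
    simp only [hM, Measure.add_apply, Measure.smul_apply, smul_eq_mul, add_eq_zero,
      mul_eq_zero] at h
    rcases h.2 with h' | h'
    · exact hhalf h'
    · exact hD₂Sc h'
  -- real-valued quantities
  set a₁ : ℝ := (D₁ S).toReal with ha₁
  set a₂ : ℝ := (D₂ S).toReal with ha₂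
  have hMS : (M S).toReal = (a₁ + a₂) / 2 := by
    simp only [hM, Measure.add_apply, Measure.smul_apply, smul_eq_mul]
    rw [ENNReal.toReal_add (ENNReal.mul_ne_top (by norm_num) (measure_ne_top _ _)) (ENNReal.mul_ne_top (by norm_num) (measure_ne_top _ _))]
    rw [ENNReal.toReal_mul, ENNReal.toReal_mul, ENNReal.toReal_div]
    simp
    ring
  have ha₁τ : τ ≤ a₁ := by
    have := ENNReal.toReal_mono (measure_ne_top D₁ S) h₁
    rwa [ENNReal.toReal_ofReal (le_of_lt hτ0)] at this
  have ha₂τ : a₂ ≤ 1 - τ := by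
    have := ENNReal.toReal_mono ENNReal.ofReal_ne_top h₂
    rwa [ENNReal.toReal_ofReal (by linarith)] at this
  have hk₁ := kl_pinsker D₁ M habs₁ hb₁ S hS h0 h1
  have hk₂ := kl_pinsker D₂ M habs₂ hb₂ S hS h0 h1
  rw [hMS] at hk₁ hk₂
  unfold jsDivergence
  rw [← hM]
  have hgap : (2*τ - 1)/2 ≤ a₁ - (a₁ + a₂)/2 := by linarith
  have hgap' : (2*τ - 1)/2 ≤ (a₁ + a₂)/2 - a₂ := by linarith
  have hc0 : (0:ℝ) ≤ (2*τ - 1)/2 := by linarith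
  have hm₁ := mul_le_mul hgap hgap hc0 (le_trans hc0 hgap)
  have hm₂ := mul_le_mul hgap' hgap' hc0 (le_trans hc0 hgap')
  have hs₁ : (2*τ-1)^2/2 ≤ 2 * (a₁ - (a₁ + a₂)/2)^2 := by nlinarith [hm₁]
  have hs₂ : (2*τ-1)^2/2 ≤ 2 * (a₂ - (a₁ + a₂)/2)^2 := by nlinarith [hm₂]
  linarith
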